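/- Let M* ∈ C_SST and let i, j ∈ [n] be two items whose expected row sums are separated as Σ_{ℓ=1}^n M*_{iℓ} − Σ_{ℓ=1}^n M*_{jℓ} > √n·(log n)². Then, for n larger than a universal constant, the observed row sums satisfy P[Σ_{ℓ=1}^n Y_{jℓ} ≥ Σ_{ℓ=1}^n Y_{iℓ}] ≤ n^{−23}. -/

import Mathlib

open MeasureTheory ENNReal

noncomputable section

namespace SSTPaper

/-- Squared Frobenius norm of an `n × n` real matrix (as a function). -/
def frobSq {n : ℕ} (A : Fin n → Fin n → ℝ) : ℝ := ∑ i, ∑ j, (A i j) ^ 2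

/-- Trace inner product `⟨A, B⟩ = trace (Aᵀ B)`. -/
def tinner {n : ℕ} (A B : Fin n → Fin n → ℝ) : ℝ := ∑ i, ∑ j, A i j * B i j

/-- The SST class: shifted-skew-symmetric matrices with entries in `[0,1]` that are
`π`-SST for some permutation `π` (where `π` ranks `i` above `j` iff `π j < π i`). -/
def sstClass (n : ℕ) : Set (Fin n → Fin n → ℝ) :=
  {M | (∀ i j, 0 ≤ M i j ∧ M i j ≤ 1) ∧ (∀ i j, M j i = 1 - M i j) ∧
    ∃ π : Equiv.Perm (Fin n), ∀ i j k : Fin n, π j < π i → M j k ≤ M i k}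

/-- The set of SST matrices faithful to a given permutation `π`. -/
def sstOf {n : ℕ} (π : Equiv.Perm (Fin n)) : Set (Fin n → Fin n → ℝ) :=
  {M | (∀ i j, 0 ≤ M i j ∧ M i j ≤ 1) ∧ (∀ i j, M j i = 1 - M i j) ∧
    ∀ i j k : Fin n, π j < π i → M j k ≤ M i k}

/-- Size of the largest indifference set of `M`: the maximal number of identical rows. -/
def kmaxM {n : ℕ} (M : Fin n → Fin n → ℝ) : ℕ :=
  Finset.univ.sup fun i => Set.ncard {j : Fin n | M j = M i}

/-- Number of indifference sets of `M`: the number of distinct rows. -/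
def numSets {n : ℕ} (M : Fin n → Fin n → ℝ) : ℕ := Set.ncard (Set.range M)

/-- SST matrices having an indifference set of size at least `k`. -/
def sstClassK (n k : ℕ) : Set (Fin n → Fin n → ℝ) :=
  {M | M ∈ sstClass n ∧ k ≤ kmaxM M}

/-- SST matrices that respect some indifference-set partition of sizes `k`. -/
def sstClassPart (n s : ℕ) (k : Fin s → ℕ) : Set (Fin n → Fin n → ℝ) :=
  {M | M ∈ sstClass n ∧ ∃ P : Fin s → Finset (Fin n),
    (∀ a b, a ≠ b → Disjoint (P a) (P b)) ∧ (∀ a, (P a).card = k a) ∧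
    (∀ i : Fin n, ∃ a, i ∈ P a) ∧
    ∀ a b : Fin s, ∀ i ∈ P a, ∀ i' ∈ P a, ∀ j ∈ P b, ∀ j' ∈ P b, M i j = M i' j'}

/-- Bernoulli measure on `Bool` with success probability `p`. -/
def bern (p : ℝ) : Measure Bool :=
  (ENNReal.ofReal p) • Measure.dirac true + (ENNReal.ofReal (1 - p)) • Measure.dirac false

/-- The law of the observation matrix `Y`: entries on and above the diagonal independent,
`P[Y i j = 1] = M i j` for `i < j`, `Y j i = 1 - Y i j` off the diagonal, and fair coin
on the diagonal. -/
def obsMeasure {n : ℕ} (M : Fin n → Fin n → ℝ) : Measure (Fin n → Fin n → ℝ) :=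
  Measure.map (fun (ω : Fin n × Fin n → Bool) (i j : Fin n) =>
      if i < j then (if ω (i, j) then (1 : ℝ) else 0)
      else if j < i then 1 - (if ω (j, i) then (1 : ℝ) else 0)
      else (if ω (i, j) then (1 : ℝ) else 0))
    (Measure.pi fun p : Fin n × Fin n => bern (if p.1 = p.2 then 1 / 2 else M p.1 p.2))

/-- The risk `E ‖M̂(Y) − M*‖²_F` of an estimator. -/
def risk {n : ℕ} (Mhat : (Fin n → Fin n → ℝ) → Fin n → Fin n → ℝ)
    (Mstar : Fin n → Fin n → ℝ) : ℝ≥0∞ :=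
  ∫⁻ Y, ENNReal.ofReal (frobSq (Mhat Y - Mstar)) ∂(obsMeasure Mstar)

/-- The `(s, k)`-oracle risk. -/
def oracleRisk (n s : ℕ) (k : Fin s → ℕ) : ℝ≥0∞ :=
  ⨅ (Mhat : (Fin n → Fin n → ℝ) → Fin n → Fin n → ℝ) (_ : Measurable Mhat),
    ⨆ (Mstar : Fin n → Fin n → ℝ) (_ : Mstar ∈ sstClassPart n s k), risk Mhat Mstar

/-- The global adaptivity index of an estimator. -/
def adaptIndex {n : ℕ} (Mhat : (Fin n → Fin n → ℝ) → Fin n → Fin n → ℝ) : ℝ≥0∞ :=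
  ⨆ (s : ℕ) (k : Fin s → ℕ) (_ : ∀ a, 1 ≤ k a) (_ : ∑ a, k a = n) (_ : ∀ a, k a < n),
    (⨆ (Mstar : Fin n → Fin n → ℝ) (_ : Mstar ∈ sstClassPart n s k), risk Mhat Mstar) /
      oracleRisk n s k

/-- Number of wins of item `i`. -/
def winCount {n : ℕ} (Y : Fin n → Fin n → ℝ) (i : Fin n) : ℝ := ∑ j, Y i j

instance {n : ℕ} : MeasurableSpace (Equiv.Perm (Fin n)) := ⊤

/-- Uniform measure on a (finite) set. -/
def unifOn {α : Type*} [Fintype α] [MeasurableSpace α] (s : Set α) : Measure α :=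
  (s.ncard : ℝ≥0∞)⁻¹ • ∑ a ∈ (Set.toFinite s).toFinset, Measure.dirac a

/-! ### Auxiliary lemmas for Statement 19 -/

lemma aux_exp_le_one_add_add_sq {x : ℝ} (h : |x| ≤ 1) : Real.exp x ≤ 1 + x + x ^ 2 := by
  have h2 := Real.exp_bound h (n := 2) (by norm_num)
  have h3 : ∑ m ∈ Finset.range 2, x ^ m / m.factorial = 1 + x := by
    simp [Finset.sum_range_succ]
  rw [h3] at h2
  norm_num [Nat.factorial] at h2
  have := (abs_sub_le_iff.1 h2).1
  nlinarith [sq_abs x, sq_nonneg x]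

lemma aux_factor_bound (w g : Bool → ℝ) (t : ℝ)
    (hw0 : ∀ x, 0 ≤ w x) (hw1 : ∑ x, w x = 1)
    (hz : ∀ x, |t * (g x - ∑ y, w y * g y)| ≤ 1) :
    ∑ x, Real.exp (t * g x) * w x ≤
      Real.exp (t * (∑ y, w y * g y) + t ^ 2 * ∑ y, w y * (g y - ∑ y', w y' * g y') ^ 2) := by
  set m := ∑ y, w y * g y with hm
  have key : ∀ x, Real.exp (t * g x) * w x ≤
      Real.exp (t * m) * ((1 + t * (g x - m) + (t * (g x - m)) ^ 2) * w x) := by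
    intro x
    have hsplit : Real.exp (t * g x) = Real.exp (t * m) * Real.exp (t * (g x - m)) := by
      rw [← Real.exp_add]; ring_nf
    rw [hsplit, mul_assoc]
    have h1 : Real.exp (t * (g x - m)) ≤ 1 + t * (g x - m) + (t * (g x - m)) ^ 2 :=
      aux_exp_le_one_add_add_sq (hz x)
    have := mul_le_mul_of_nonneg_right h1 (hw0 x)
    exact mul_le_mul_of_nonneg_left this (Real.exp_nonneg _)
  calc ∑ x, Real.exp (t * g x) * w x
      ≤ ∑ x, Real.exp (t * m) * ((1 + t * (g x - m) + (t * (g x - m)) ^ 2) * w x) :=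
        Finset.sum_le_sum fun x _ => key x
    _ = Real.exp (t * m) *
        (∑ x, w x + t * ∑ x, w x * (g x - m) + t ^ 2 * ∑ x, w x * (g x - m) ^ 2) := by
        rw [← Finset.mul_sum]; congr 1
        rw [Finset.mul_sum, Finset.mul_sum, ← Finset.sum_add_distrib, ← Finset.sum_add_distrib]
        apply Finset.sum_congr rfl; intro x _; ring
    _ ≤ Real.exp (t * m) * Real.exp (t ^ 2 * ∑ x, w x * (g x - m) ^ 2) := by
        have hzero : ∑ x, w x * (g x - m) = 0 := by
          have hh : ∑ x, w x * (g x - m) = (∑ x, w x * g x) - m * ∑ x, w x := by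
            rw [Finset.mul_sum, ← Finset.sum_sub_distrib]
            apply Finset.sum_congr rfl; intro x _; ring
          rw [hh, hw1]; simp [hm]
        rw [hzero, hw1]
        have hexp := Real.add_one_le_exp (t ^ 2 * ∑ x, w x * (g x - m) ^ 2)
        apply mul_le_mul_of_nonneg_left _ (Real.exp_nonneg _)
        · linarith [hexp]
    _ = _ := by rw [← Real.exp_add]

lemma aux_chernoff {ι : Type*} [Fintype ι] [DecidableEq ι]
    (w g : ι → Bool → ℝ) (m C : ι → ℝ) (t : ℝ) (ht : 0 ≤ t)
    (hw0 : ∀ p x, 0 ≤ w p x) (hw1 : ∀ p, ∑ x, w p x = 1)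
    (hm : ∀ p, m p = ∑ y, w p y * g p y)
    (hC : ∀ p, C p = ∑ y, w p y * (g p y - m p) ^ 2)
    (hz : ∀ p x, |t * (g p x - m p)| ≤ 1)
    (A : Finset (ι → Bool)) (hA : ∀ ω ∈ A, 0 ≤ ∑ p, g p (ω p)) :
    ∑ ω ∈ A, ∏ p, w p (ω p) ≤ Real.exp (t * ∑ p, m p + t ^ 2 * ∑ p, C p) := by
  have factor : ∀ p, ∑ x, Real.exp (t * g p x) * w p x ≤ Real.exp (t * m p + t ^ 2 * C p) := by
    intro p
    have hz' : ∀ x, |t * (g p x - ∑ y, w p y * g p y)| ≤ 1 := by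
      intro x; rw [← hm p]; exact hz p x
    have := aux_factor_bound (w p) (g p) t (hw0 p) (hw1 p) hz'
    rw [hC p, hm p]
    exact this
  have prodnn : ∀ ω : ι → Bool, 0 ≤ ∏ p, w p (ω p) := fun ω =>
    Finset.prod_nonneg fun p _ => hw0 p (ω p)
  have step1 : ∑ ω ∈ A, ∏ p, w p (ω p)
      ≤ ∑ ω : ι → Bool, Real.exp (t * ∑ p, g p (ω p)) * ∏ p, w p (ω p) := by
    calc _ ≤ ∑ ω ∈ A, Real.exp (t * ∑ p, g p (ω p)) * ∏ p, w p (ω p) := by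
            apply Finset.sum_le_sum
            intro ω hω
            have h0 : (0:ℝ) ≤ t * ∑ p, g p (ω p) := mul_nonneg ht (hA ω hω)
            nth_rewrite 1 [← one_mul (∏ p, w p (ω p))]
            have h1 : (1:ℝ) ≤ Real.exp (t * ∑ p, g p (ω p)) := by
              rw [← Real.exp_zero]; exact Real.exp_le_exp.2 h0
            exact mul_le_mul_of_nonneg_right h1 (prodnn ω)
      _ ≤ _ := Finset.sum_le_sum_of_subset_of_nonneg (Finset.subset_univ A)
            (fun ω _ _ => mul_nonneg (Real.exp_nonneg _) (prodnn ω))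
  have step2 : ∑ ω : ι → Bool, Real.exp (t * ∑ p, g p (ω p)) * ∏ p, w p (ω p)
      = ∏ p, ∑ x, Real.exp (t * g p x) * w p x := by
    rw [Finset.prod_univ_sum]
    rw [← Fintype.piFinset_univ]
    apply Finset.sum_congr rfl
    intro ω _
    rw [Finset.mul_sum, Real.exp_sum, ← Finset.prod_mul_distrib]
  rw [step2] at step1
  refine step1.trans ?_
  calc ∏ p, ∑ x, Real.exp (t * g p x) * w p x
      ≤ ∏ p, Real.exp (t * m p + t ^ 2 * C p) := by
        apply Finset.prod_le_prod
        · intro p _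
          exact Finset.sum_nonneg fun x _ => mul_nonneg (Real.exp_nonneg _) (hw0 p x)
        · intro p _; exact factor p
    _ = _ := by
        rw [← Real.exp_sum]
        congr 1
        rw [Finset.sum_add_distrib, ← Finset.mul_sum, ← Finset.mul_sum]

/-! ### Measure computation -/

instance bern_finite (p : ℝ) : IsFiniteMeasure (bern p) := by
  constructor
  simp only [bern, Measure.add_apply, Measure.smul_apply, smul_eq_mul]
  simp [lt_top_iff_ne_top]

lemma bern_singleton (p : ℝ) (b : Bool) :
    bern p {b} = ENNReal.ofReal (if b then p else 1 - p) := by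
  cases b <;>
  simp [bern, Measure.dirac_apply' _ (measurableSet_singleton _)]

lemma pi_bern_apply {ι : Type*} [Fintype ι] [DecidableEq ι] (q : ι → ℝ) (S : Set (ι → Bool))
    [DecidablePred (· ∈ S)] :
    Measure.pi (fun p => bern (q p)) S =
      ∑ ω ∈ Finset.univ.filter (· ∈ S),
        ∏ p, ENNReal.ofReal (if ω p then q p else 1 - q p) := by
  classical
  have hsingle : ∀ ω : ι → Bool, Measure.pi (fun p => bern (q p)) {ω} =
      ∏ p, ENNReal.ofReal (if ω p then q p else 1 - q p) := by
    intro ω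
    have h1 : ({ω} : Set (ι → Bool)) = Set.pi Set.univ (fun p => {ω p}) := by
      ext f; simp [Set.mem_pi, funext_iff]
    rw [h1, Measure.pi_pi]
    exact Finset.prod_congr rfl fun p _ => bern_singleton (q p) (ω p)
  have hS : S = ⋃ ω ∈ (Finset.univ.filter (· ∈ S) : Finset (ι → Bool)), ({ω} : Set (ι → Bool)) := by
    ext f; simp
  conv_lhs => rw [hS]
  rw [measure_biUnion_finset]
  · exact Finset.sum_congr rfl fun ω _ => hsingle ω
  · intro a _ b _ hab
    simp [Function.onFun, Set.disjoint_singleton, hab]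
  · intro ω _; exact measurableSet_singleton ω

/-! ### Coordinates for the observation map -/

def ind (x : Bool) : ℝ := if x then 1 else 0

def kap {n : ℕ} (a b : Fin n) : Fin n × Fin n := if b < a then (b, a) else (a, b)

def vl {n : ℕ} (a b : Fin n) (x : Bool) : ℝ := if b < a then 1 - ind x else ind x

def qq {n : ℕ} (M : Fin n → Fin n → ℝ) (p : Fin n × Fin n) : ℝ :=
  if p.1 = p.2 then 1 / 2 else M p.1 p.2

def ww {n : ℕ} (M : Fin n → Fin n → ℝ) (p : Fin n × Fin n) (x : Bool) : ℝ :=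
  if x then qq M p else 1 - qq M p

def gg {n : ℕ} (i j : Fin n) (p : Fin n × Fin n) (x : Bool) : ℝ :=
  (∑ l, if kap j l = p then vl j l x else 0) - (∑ l, if kap i l = p then vl i l x else 0)

lemma ind_nonneg (x : Bool) : 0 ≤ ind x := by cases x <;> simp [ind]

lemma ind_le_one (x : Bool) : ind x ≤ 1 := by cases x <;> simp [ind]

lemma vl_nonneg {n : ℕ} (a b : Fin n) (x : Bool) : 0 ≤ vl a b x := by
  unfold vl; split_ifs
  · linarith [ind_le_one x]
  · exact ind_nonneg x

lemma vl_le_one {n : ℕ} (a b : Fin n) (x : Bool) : vl a b x ≤ 1 := by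
  unfold vl; split_ifs
  · linarith [ind_nonneg x]
  · exact ind_le_one x

lemma kap_inj {n : ℕ} (a : Fin n) : Function.Injective (kap a) := by
  intro l l' h
  unfold kap at h
  split_ifs at h <;> rw [Prod.ext_iff] at h <;>
    simp only at h <;> omega

lemma obs_map_eq {n : ℕ} (M : Fin n → Fin n → ℝ) :
    obsMeasure M = Measure.map (fun (ω : Fin n × Fin n → Bool) (a b : Fin n) =>
      vl a b (ω (kap a b))) (Measure.pi fun p => bern (qq M p)) := by
  unfold obsMeasure
  congr 1
  funext ω a b
  rcases lt_trichotomy a b with h | h | h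
  · have h2 : ¬ b < a := asymm h
    simp [h, h2, kap, vl, ind]
  · subst h
    simp [kap, vl, ind]
  · simp [h, asymm h, kap, vl, ind]

lemma mean_vl {n : ℕ} (M : Fin n → Fin n → ℝ) (hskew : ∀ i j, M j i = 1 - M i j)
    (a b : Fin n) : ∑ x, ww M (kap a b) x * vl a b x = M a b := by
  rw [Fintype.sum_bool]
  rcases lt_trichotomy a b with h | h | h
  · have h2 : ¬ b < a := asymm h
    have hne : a ≠ b := ne_of_lt h
    simp [kap, vl, ww, qq, ind, h2, hne]
  · subst h
    have : M a a = 1 - M a a := hskew a a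
    have hMa : M a a = 1 / 2 := by linarith
    simp [kap, vl, ww, qq, ind, hMa]
  · have hne : b ≠ a := ne_of_lt h
    have hab : M a b = 1 - M b a := by rw [hskew b a]
    simp [kap, vl, ww, qq, ind, h, hne]
    linarith

lemma sum_ite_coord {n : ℕ} {ι : Type*} [Fintype ι] [DecidableEq ι]
    (κ' : Fin n → ι) (v : Fin n → ι → ℝ) :
    ∑ p, ∑ l, (if κ' l = p then v l p else 0) = ∑ l, v l (κ' l) := by
  rw [Finset.sum_comm]
  apply Finset.sum_congr rfl
  intro l _
  rw [Finset.sum_ite_eq Finset.univ (κ' l) (v l)]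
  simp

lemma D_eq {n : ℕ} (i j : Fin n) (ω : Fin n × Fin n → Bool) :
    ∑ p, gg i j p (ω p) =
      (∑ l, vl j l (ω (kap j l))) - ∑ l, vl i l (ω (kap i l)) := by
  unfold gg
  rw [Finset.sum_sub_distrib]
  congr 1
  · exact sum_ite_coord (kap j) (fun l p => vl j l (ω p))
  · exact sum_ite_coord (kap i) (fun l p => vl i l (ω p))

lemma mean_sum {n : ℕ} (M : Fin n → Fin n → ℝ) (hskew : ∀ i j, M j i = 1 - M i j)
    (a : Fin n) :
    ∑ p, ∑ x, ww M p x * (∑ l, if kap a l = p then vl a l x else 0) = ∑ l, M a l := by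
  have h1 : ∀ p : Fin n × Fin n,
      (∑ x, ww M p x * (∑ l, if kap a l = p then vl a l x else 0)) =
      ∑ l, (if kap a l = p then (∑ x, ww M p x * vl a l x) else 0) := by
    intro p
    simp only [Finset.mul_sum]
    rw [Finset.sum_comm]
    apply Finset.sum_congr rfl
    intro l _
    by_cases h : kap a l = p <;> simp [h]
  calc ∑ p, ∑ x, ww M p x * (∑ l, if kap a l = p then vl a l x else 0)
      = ∑ p, ∑ l, (if kap a l = p then (∑ x, ww M p x * vl a l x) else 0) :=
        Finset.sum_congr rfl fun p _ => h1 p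
    _ = ∑ l, ∑ x, ww M (kap a l) x * vl a l x :=
        sum_ite_coord (kap a) (fun l p => ∑ x, ww M p x * vl a l x)
    _ = ∑ l, M a l := Finset.sum_congr rfl fun l _ => mean_vl M hskew a l

lemma bracket_mem {n : ℕ} (a : Fin n) (p : Fin n × Fin n) (x : Bool) :
    0 ≤ (∑ l, if kap a l = p then vl a l x else 0) ∧
      (∑ l, if kap a l = p then vl a l x else 0) ≤ 1 := by
  constructor
  · apply Finset.sum_nonneg
    intro l _
    split_ifs
    · exact vl_nonneg a l x
    · exact le_refl 0
  · have hcard : (Finset.univ.filter (fun l => kap a l = p)).card ≤ 1 := by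
      rw [Finset.card_le_one]
      intro b hb c hc
      exact kap_inj a ((Finset.mem_filter.1 hb).2.trans (Finset.mem_filter.1 hc).2.symm)
    calc (∑ l, if kap a l = p then vl a l x else 0)
        = ∑ l ∈ Finset.univ.filter (fun l => kap a l = p), vl a l x := by
          rw [Finset.sum_filter]
      _ ≤ ∑ l ∈ Finset.univ.filter (fun l => kap a l = p), 1 :=
          Finset.sum_le_sum fun l _ => vl_le_one a l x
      _ = (Finset.univ.filter (fun l => kap a l = p)).card := by simp
      _ ≤ 1 := by exact_mod_cast hcard

lemma gg_abs_le_one {n : ℕ} (i j : Fin n) (p : Fin n × Fin n) (x : Bool) :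
    |gg i j p x| ≤ 1 := by
  unfold gg
  have h1 := bracket_mem j p x
  have h2 := bracket_mem i p x
  rw [abs_le]
  constructor <;> linarith [h1.1, h1.2, h2.1, h2.2]

lemma gg_zero {n : ℕ} (i j : Fin n) (p : Fin n × Fin n)
    (hp : p ∉ (Finset.univ.image (kap i) ∪ Finset.univ.image (kap j))) (x : Bool) :
    gg i j p x = 0 := by
  unfold gg
  rw [Finset.mem_union, not_or] at hp
  have h1 : ∀ l : Fin n, kap i l ≠ p := by
    intro l hl
    exact hp.1 (Finset.mem_image.2 ⟨l, Finset.mem_univ l, hl⟩)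
  have h2 : ∀ l : Fin n, kap j l ≠ p := by
    intro l hl
    exact hp.2 (Finset.mem_image.2 ⟨l, Finset.mem_univ l, hl⟩)
  rw [Finset.sum_eq_zero fun l _ => if_neg (h2 l), Finset.sum_eq_zero fun l _ => if_neg (h1 l)]
  ring

set_option maxHeartbeats 1000000

/-- row-sum separation: if the expected row sums of items `i` and `j`
under `M* ∈ C_SST` are separated by more than `√n (log n)²`, then for `n` larger than
a universal constant, `P[Σ_ℓ Y_{jℓ} ≥ Σ_ℓ Y_{iℓ}] ≤ n⁻²³`. -/
theorem row_sum_separation :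
    ∃ N : ℕ, ∀ n : ℕ, N ≤ n →
      ∀ Mstar ∈ sstClass n, ∀ i j : Fin n,
        Real.sqrt n * (Real.log n) ^ 2 < (∑ l, Mstar i l) - ∑ l, Mstar j l →
        obsMeasure Mstar {Y | (∑ l, Y i l) ≤ ∑ l, Y j l} ≤
          ENNReal.ofReal (((n : ℝ) ^ 23)⁻¹) := by
  classical
  use 59049
  intro n hn M hM i j hsep
  obtain ⟨h01, hskew, -⟩ := hM
  have hnR : (59049:ℝ) ≤ n := by exact_mod_cast hn
  have hn0 : (0:ℝ) < n := by linarith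
  have hlog : (10:ℝ) ≤ Real.log n := by
    rw [Real.le_log_iff_exp_le hn0]
    have h1 : Real.exp 10 = Real.exp 1 ^ (10:ℕ) := by
      rw [← Real.exp_nat_mul]; norm_num
    have h2 : Real.exp 1 ^ (10:ℕ) ≤ (2.7182818286:ℝ) ^ (10:ℕ) :=
      pow_le_pow_left₀ (Real.exp_pos 1).le Real.exp_one_lt_d9.le 10
    have h3 : (2.7182818286:ℝ) ^ (10:ℕ) ≤ 59049 := by norm_num
    linarith
  have hlog0 : (0:ℝ) < Real.log n := by linarith
  set u : ℝ := (∑ l, M i l) - ∑ l, M j l with hu_def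
  have hsqlog : 0 ≤ Real.sqrt n * (Real.log n) ^ 2 := by positivity
  have hu0 : 0 < u := lt_of_le_of_lt hsqlog hsep
  have husq : (n:ℝ) * (Real.log n) ^ 4 < u ^ 2 := by
    have hstep : (Real.sqrt n * Real.log n ^ 2) ^ 2 = (n:ℝ) * Real.log n ^ 4 := by
      rw [mul_pow, Real.sq_sqrt hn0.le]; ring
    have hpow : (Real.sqrt n * Real.log n ^ 2) ^ 2 < u ^ 2 := by
      apply pow_lt_pow_left₀ hsep hsqlog
      norm_num
    linarith
  have hu_le : u ≤ n := by
    have h1 : (∑ l, M i l) ≤ (n:ℝ) := by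
      calc (∑ l, M i l) ≤ ∑ _l : Fin n, (1:ℝ) := Finset.sum_le_sum fun l _ => (h01 i l).2
        _ = n := by simp
    have h2 : (0:ℝ) ≤ ∑ l, M j l := Finset.sum_nonneg fun l _ => (h01 j l).1
    rw [hu_def]; linarith
  set t : ℝ := u / (16 * n) with ht_def
  clear_value u
  have ht0 : 0 ≤ t := by rw [ht_def]; positivity
  clear_value t
  have ht16 : t ≤ 1 / 16 := by
    rw [ht_def, div_le_div_iff₀ (by positivity) (by norm_num)]
    linarith
  have hq : ∀ p : Fin n × Fin n, 0 ≤ qq M p ∧ qq M p ≤ 1 := by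
    intro p; unfold qq; split_ifs
    · norm_num
    · exact h01 p.1 p.2
  have hw0 : ∀ p x, 0 ≤ ww M p x := by
    intro p x; rcases hq p with ⟨h1, h2⟩; unfold ww; split_ifs <;> linarith
  have hw1 : ∀ p, ∑ x, ww M p x = 1 := by
    intro p; rw [Fintype.sum_bool]; unfold ww; simp
  set m : Fin n × Fin n → ℝ := fun p => ∑ y, ww M p y * gg i j p y with hm_def
  set C : Fin n × Fin n → ℝ := fun p => ∑ y, ww M p y * (gg i j p y - m p) ^ 2 with hC_def
  have hm_abs : ∀ p, |m p| ≤ 1 := by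
    intro p
    calc |m p| ≤ ∑ y, |ww M p y * gg i j p y| := by
          rw [hm_def]; exact Finset.abs_sum_le_sum_abs _ _
      _ ≤ ∑ y, ww M p y := by
          apply Finset.sum_le_sum
          intro y _
          rw [abs_mul, abs_of_nonneg (hw0 p y)]
          calc ww M p y * |gg i j p y| ≤ ww M p y * 1 :=
                mul_le_mul_of_nonneg_left (gg_abs_le_one i j p y) (hw0 p y)
            _ = ww M p y := mul_one _
      _ = 1 := hw1 p
  have hgm : ∀ p x, |gg i j p x - m p| ≤ 2 := by
    intro p x
    calc |gg i j p x - m p| ≤ |gg i j p x| + |m p| := abs_sub _ _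
      _ ≤ 2 := by linarith [gg_abs_le_one i j p x, hm_abs p]
  have hz : ∀ p x, |t * (gg i j p x - m p)| ≤ 1 := by
    intro p x
    rw [abs_mul, abs_of_nonneg ht0]
    calc t * |gg i j p x - m p| ≤ (1 / 16) * 2 :=
          mul_le_mul ht16 (hgm p x) (abs_nonneg _) (by norm_num)
      _ ≤ 1 := by norm_num
  have hC4 : ∀ p, C p ≤ 4 := by
    intro p
    calc C p ≤ ∑ y, ww M p y * 4 := by
          rw [hC_def]
          apply Finset.sum_le_sum
          intro y _
          apply mul_le_mul_of_nonneg_left _ (hw0 p y)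
          nlinarith [abs_le.1 (hgm p y)]
      _ = (∑ y, ww M p y) * 4 := by rw [Finset.sum_mul]
      _ = 4 := by rw [hw1 p]; norm_num
  set Simg : Finset (Fin n × Fin n) :=
    Finset.univ.image (kap i) ∪ Finset.univ.image (kap j) with hSimg_def
  have hC0 : ∀ p, p ∉ Simg → C p = 0 := by
    intro p hp
    have hg0 : ∀ x, gg i j p x = 0 := gg_zero i j p hp
    have hm0 : m p = 0 := by rw [hm_def]; simp [hg0]
    rw [hC_def]; simp [hg0, hm0]
  have hCsum : ∑ p, C p ≤ 8 * n := by
    have hcard : (Simg.card : ℝ) ≤ 2 * n := by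
      have h := Finset.card_union_le (Finset.univ.image (kap i)) (Finset.univ.image (kap j))
      have h1 := Finset.card_image_le (s := (Finset.univ : Finset (Fin n))) (f := kap i)
      have h2 := Finset.card_image_le (s := (Finset.univ : Finset (Fin n))) (f := kap j)
      simp only [Finset.card_univ, Fintype.card_fin] at h1 h2
      have h4 : Simg.card ≤ 2 * n := by rw [hSimg_def]; omega
      exact_mod_cast h4
    have heq : ∑ p, C p = ∑ p ∈ Simg, C p :=
      (Finset.sum_subset (Finset.subset_univ _) fun p _ hp => hC0 p hp).symm
    rw [heq]
    calc ∑ p ∈ Simg, C p ≤ ∑ _p ∈ Simg, (4:ℝ) := Finset.sum_le_sum fun p _ => hC4 p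
      _ = Simg.card * 4 := by rw [Finset.sum_const]; simp [mul_comm]
      _ ≤ (2 * n) * 4 := by nlinarith [hcard]
      _ = 8 * n := by ring
  have hmsum : ∑ p, m p = (∑ l, M j l) - ∑ l, M i l := by
    have expand : ∀ p : Fin n × Fin n, m p =
        (∑ y, ww M p y * (∑ l, if kap j l = p then vl j l y else 0))
          - ∑ y, ww M p y * (∑ l, if kap i l = p then vl i l y else 0) := by
      intro p
      rw [hm_def]
      simp only [gg]
      rw [← Finset.sum_sub_distrib]
      apply Finset.sum_congr rfl; intro y _; ring
    calc ∑ p, m p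
        = ∑ p : Fin n × Fin n, ((∑ y, ww M p y * (∑ l, if kap j l = p then vl j l y else 0))
          - ∑ y, ww M p y * (∑ l, if kap i l = p then vl i l y else 0)) :=
          Finset.sum_congr rfl fun p _ => expand p
      _ = (∑ p : Fin n × Fin n, ∑ y, ww M p y * (∑ l, if kap j l = p then vl j l y else 0))
          - ∑ p : Fin n × Fin n, ∑ y, ww M p y * (∑ l, if kap i l = p then vl i l y else 0) :=
          Finset.sum_sub_distrib _ _
      _ = (∑ l, M j l) - ∑ l, M i l := by
          rw [mean_sum M hskew j, mean_sum M hskew i]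
  have hEmeas : MeasurableSet {Y : Fin n → Fin n → ℝ | (∑ l, Y i l) ≤ ∑ l, Y j l} := by
    apply measurableSet_le <;>
    · apply Finset.measurable_sum
      intro l _
      exact (measurable_pi_apply l).comp (measurable_pi_apply _)
  have hfmeas : Measurable (fun (ω : Fin n × Fin n → Bool) (a b : Fin n) =>
      vl a b (ω (kap a b))) := measurable_of_countable _
  rw [obs_map_eq, Measure.map_apply hfmeas hEmeas]
  set S : Set (Fin n × Fin n → Bool) :=
    (fun (ω : Fin n × Fin n → Bool) (a b : Fin n) => vl a b (ω (kap a b))) ⁻¹'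
      {Y | (∑ l, Y i l) ≤ ∑ l, Y j l} with hS_def
  rw [pi_bern_apply (qq M) S]
  have hconv : ∑ ω ∈ Finset.univ.filter (· ∈ S),
      ∏ p, ENNReal.ofReal (if ω p then qq M p else 1 - qq M p)
      = ENNReal.ofReal (∑ ω ∈ Finset.univ.filter (· ∈ S), ∏ p, ww M p (ω p)) := by
    rw [ENNReal.ofReal_sum_of_nonneg fun ω _ => Finset.prod_nonneg fun p _ => hw0 p (ω p)]
    apply Finset.sum_congr rfl
    intro ω _
    rw [ENNReal.ofReal_prod_of_nonneg fun p _ => hw0 p (ω p)]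
    rfl
  rw [hconv]
  apply ENNReal.ofReal_le_ofReal
  have hA : ∀ ω ∈ Finset.univ.filter (· ∈ S), 0 ≤ ∑ p, gg i j p (ω p) := by
    intro ω hω
    have hωS : ω ∈ S := (Finset.mem_filter.1 hω).2
    rw [hS_def, Set.mem_preimage, Set.mem_setOf_eq] at hωS
    rw [D_eq i j ω]
    linarith [hωS]
  have hbound := aux_chernoff (ww M) (gg i j) m C t ht0 hw0 hw1
    (fun p => rfl) (fun p => rfl) hz (Finset.univ.filter (· ∈ S)) hA
  refine hbound.trans ?_
  have hexp_bound : t * ∑ p, m p + t ^ 2 * ∑ p, C p ≤ -(23 * Real.log n) := by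
    rw [hmsum]
    have e0 : (∑ l, M j l) - ∑ l, M i l = -u := by rw [hu_def]; ring
    rw [e0]
    have e1 : t * (-u) = -(u ^ 2 / (16 * n)) := by
      rw [ht_def]; field_simp
    have e2 : t ^ 2 * ∑ p, C p ≤ u ^ 2 / (32 * n) := by
      calc t ^ 2 * ∑ p, C p ≤ t ^ 2 * (8 * n) :=
            mul_le_mul_of_nonneg_left hCsum (sq_nonneg t)
        _ = u ^ 2 / (32 * n) := by rw [ht_def]; field_simp; ring
    have e4 : (Real.log n) ^ 4 / 32 ≤ u ^ 2 / (32 * n) := by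
      rw [div_le_div_iff₀ (by norm_num) (by positivity)]
      nlinarith [husq]
    have e5 : 23 * Real.log n ≤ (Real.log n) ^ 4 / 32 := by
      have hL2 : (100:ℝ) ≤ (Real.log n) ^ 2 := by nlinarith [hlog]
      have hL3 : (1000:ℝ) ≤ (Real.log n) ^ 3 := by nlinarith [hlog, hL2]
      have hL4 : 1000 * Real.log n ≤ (Real.log n) ^ 4 := by nlinarith [hL3, hlog0]
      linarith
    have e7 : u ^ 2 / (32 * n) + u ^ 2 / (32 * n) = u ^ 2 / (16 * n) := by
      field_simp; ring
    rw [e1]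
    linarith [e2, e4, e5, e7]
  calc Real.exp (t * ∑ p, m p + t ^ 2 * ∑ p, C p)
      ≤ Real.exp (-(23 * Real.log n)) := Real.exp_le_exp.2 hexp_bound
    _ = ((n:ℝ) ^ 23)⁻¹ := by
        rw [Real.exp_neg]
        congr 1
        rw [show (23:ℝ) * Real.log n = ((23:ℕ):ℝ) * Real.log n by norm_num,
          Real.exp_nat_mul, Real.exp_log hn0]

end SSTPaper
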